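/- Let S = M^1_{\geq 0} \times \cdots \times M^d_{\geq 0} and let I be an ideal set with a finite decomposition I = \bigcap_{i=1}^t J_i into m-irreducible ideal sets, with t \geq 1. Then m-dim(S/I) = max_{1 \leq i \leq t} m-dim(S/J_i). -/

import Mathlib

/-- The semigroup `S = M^1_{≥0} × ⋯ × M^d_{≥0}`, realized as a subset of `Fin d → ℝ`. -/
def Sset {d : ℕ} (M : Fin d → AddSubgroup ℝ) : Set (Fin d → ℝ) :=
  {s | ∀ i, s i ∈ M i ∧ 0 ≤ s i}

/-- The "monomial ideal set" (up-set) generated by `T ⊆ S`. -/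
def Up {d : ℕ} (M : Fin d → AddSubgroup ℝ) (T : Set (Fin d → ℝ)) : Set (Fin d → ℝ) :=
  {s | ∃ t ∈ T, ∃ u ∈ Sset M, s = t + u}

/-- An ideal set of `S`: a subset of `S` closed under adding arbitrary elements of `S`. -/
def IsIdealSet {d : ℕ} (M : Fin d → AddSubgroup ℝ) (I : Set (Fin d → ℝ)) : Prop :=
  I ⊆ Sset M ∧ ∀ s ∈ I, ∀ u ∈ Sset M, s + u ∈ I

/-- The m-prime ideal set `Q_T = {s ∈ S | s i > 0 for some i ∈ T}`. -/
def QT {d : ℕ} (M : Fin d → AddSubgroup ℝ) (T : Finset (Fin d)) : Set (Fin d → ℝ) :=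
  {s ∈ Sset M | ∃ i ∈ T, 0 < s i}

/-- An m-prime ideal set: a proper ideal set `P` with `f + g ∈ P → f ∈ P ∨ g ∈ P`. -/
def IsMPrime {d : ℕ} (M : Fin d → AddSubgroup ℝ) (P : Set (Fin d → ℝ)) : Prop :=
  IsIdealSet M P ∧ P ≠ Sset M ∧
    ∀ f ∈ Sset M, ∀ g ∈ Sset M, f + g ∈ P → f ∈ P ∨ g ∈ P

/-- An m-irreducible ideal set. -/
def MIrred {d : ℕ} (M : Fin d → AddSubgroup ℝ) (I : Set (Fin d → ℝ)) : Prop :=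
  IsIdealSet M I ∧ I ≠ Sset M ∧
    ∀ J K : Set (Fin d → ℝ), IsIdealSet M J → IsIdealSet M K → I = J ∩ K → I = J ∨ I = K

/-- Monomial Krull dimension: `sup {d - |T| : Q_T ⊇ I}` (m-primes are exactly the `Q_T`). -/
noncomputable def mdim {d : ℕ} (M : Fin d → AddSubgroup ℝ) (I : Set (Fin d → ℝ)) : ℕ :=
  sSup {n : ℕ | ∃ T : Finset (Fin d), I ⊆ QT M T ∧ n = d - T.card}

/-- Euclidean distance between exponent vectors. -/
noncomputable def myDist {d : ℕ} (γ δ : Fin d → ℝ) : ℝ :=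
  Real.sqrt (∑ i, (γ i - δ i) ^ 2)

/-- `dist(I,J) < ε` in the sense of Definition 4.5 of the paper. -/
def DistLT {d : ℕ} (ε : ℝ) (I J : Set (Fin d → ℝ)) : Prop :=
  (∀ γ ∈ I, ∃ δ ∈ J, myDist γ δ < ε) ∧ (∀ δ ∈ J, ∃ γ ∈ I, myDist γ δ < ε)

/-- Distance between ideal sets (Definition 4.6). -/
noncomputable def idealDist {d : ℕ} (I J : Set (Fin d → ℝ)) : ℝ :=
  sInf {ε : ℝ | 0 < ε ∧ DistLT ε I J}

/-- Finitely generated ideal set. -/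
def IsFG {d : ℕ} (M : Fin d → AddSubgroup ℝ) (I : Set (Fin d → ℝ)) : Prop :=
  ∃ G : Finset (Fin d → ℝ), ↑G ⊆ Sset M ∧ I = Up M ↑G

lemma zero_mem_Sset {d : ℕ} (M : Fin d → AddSubgroup ℝ) : (0 : Fin d → ℝ) ∈ Sset M := by
  intro i; exact ⟨(M i).zero_mem, le_refl 0⟩

lemma add_mem_Sset {d : ℕ} (M : Fin d → AddSubgroup ℝ) {a b : Fin d → ℝ}
    (ha : a ∈ Sset M) (hb : b ∈ Sset M) : a + b ∈ Sset M := by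
  intro i
  exact ⟨(M i).add_mem (ha i).1 (hb i).1, add_nonneg (ha i).2 (hb i).2⟩

lemma sum_mem_Sset {d t : ℕ} (M : Fin d → AddSubgroup ℝ) (f : Fin t → Fin d → ℝ)
    (s : Finset (Fin t)) (hf : ∀ k ∈ s, f k ∈ Sset M) : ∑ k ∈ s, f k ∈ Sset M := by
  classical
  induction s using Finset.induction with
  | empty => simpa using zero_mem_Sset M
  | insert _ _ hx ih =>
    rw [Finset.sum_insert hx]
    exact add_mem_Sset M (hf _ (Finset.mem_insert_self _ _))
      (ih fun k hk => hf k (Finset.mem_insert_of_mem hk))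

/-- An ideal set containing 0 is all of S. -/
lemma eq_Sset_of_zero_mem {d : ℕ} {M : Fin d → AddSubgroup ℝ} {I : Set (Fin d → ℝ)}
    (hI : IsIdealSet M I) (h0 : (0 : Fin d → ℝ) ∈ I) : I = Sset M := by
  refine Set.Subset.antisymm hI.1 fun u hu => ?_
  simpa using hI.2 0 h0 u hu

/-- A proper ideal set is contained in `Q_univ`. -/
lemma subset_QT_univ {d : ℕ} {M : Fin d → AddSubgroup ℝ} {I : Set (Fin d → ℝ)}
    (hI : IsIdealSet M I) (hne : I ≠ Sset M) : I ⊆ QT M Finset.univ := by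
  intro s hs
  refine ⟨hI.1 hs, ?_⟩
  by_contra h
  push_neg at h
  have hs0 : s = 0 := by
    funext i
    exact le_antisymm (h i (Finset.mem_univ i)) ((hI.1 hs i).2)
  exact hne (eq_Sset_of_zero_mem hI (hs0 ▸ hs))

lemma mdim_set_bddAbove {d : ℕ} (M : Fin d → AddSubgroup ℝ) (I : Set (Fin d → ℝ)) :
    BddAbove {n : ℕ | ∃ T : Finset (Fin d), I ⊆ QT M T ∧ n = d - T.card} := by
  refine ⟨d, fun n hn => ?_⟩
  obtain ⟨T, -, rfl⟩ := hn
  exact Nat.sub_le _ _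

/-- Key step: if `Q_T ⊇ ⋂ᵢ Jᵢ` then `Q_T ⊇ Jₖ` for some `k`. -/
lemma exists_subset_QT {d t : ℕ} {M : Fin d → AddSubgroup ℝ} {J : Fin t → Set (Fin d → ℝ)}
    (hJ : ∀ i, IsIdealSet M (J i)) {T : Finset (Fin d)}
    (hsub : (⋂ i, J i) ⊆ QT M T) : ∃ k, J k ⊆ QT M T := by
  classical
  by_contra h
  push_neg at h
  have hf : ∀ k, ∃ f, f ∈ J k ∧ f ∉ QT M T := by
    intro k
    obtain ⟨f, hf1, hf2⟩ := Set.not_subset.mp (h k)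
    exact ⟨f, hf1, hf2⟩
  choose f hfJ hfQ using hf
  set F : Fin d → ℝ := ∑ k, f k with hF
  have hFS : ∀ k, f k ∈ Sset M := fun k => (hJ k).1 (hfJ k)
  have hFmem : F ∈ ⋂ i, J i := by
    refine Set.mem_iInter.mpr fun j => ?_
    have : F = f j + ∑ k ∈ Finset.univ.erase j, f k := by
      rw [hF, ← Finset.add_sum_erase _ _ (Finset.mem_univ j)]
    rw [this]
    exact (hJ j).2 _ (hfJ j) _ (sum_mem_Sset M f _ fun k _ => hFS k)
  obtain ⟨hFS', i, hiT, hipos⟩ := hsub hFmem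
  have : ∃ k : Fin t, 0 < f k i := by
    by_contra hk
    push_neg at hk
    have : F i ≤ 0 := by
      rw [hF]
      simpa using Finset.sum_nonpos (fun k _ => hk k)
    exact absurd hipos (not_lt.mpr this)
  obtain ⟨k, hk⟩ := this
  exact hfQ k ⟨hFS k, i, hiT, hk⟩

/-- for a finite m-irreducible decomposition `I = ⋂ᵢ Jᵢ` (t ≥ 1),
`mdim (S/I) = maxᵢ mdim (S/Jᵢ)`. -/
theorem stmt12 (d t : ℕ) (ht : 0 < t) (M : Fin d → AddSubgroup ℝ) (hM : ∀ i, M i ≠ ⊥)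
    (J : Fin t → Set (Fin d → ℝ)) (hJ : ∀ i, MIrred M (J i)) :
    mdim M (⋂ i, J i) = sSup {n : ℕ | ∃ i, n = mdim M (J i)} := by
  classical
  set A : Set (Fin d → ℝ) → Set ℕ :=
    fun I => {n : ℕ | ∃ T : Finset (Fin d), I ⊆ QT M T ∧ n = d - T.card} with hA
  have hAne : ∀ i, (A (J i)).Nonempty := fun i =>
    ⟨d - (Finset.univ : Finset (Fin d)).card,
      Finset.univ, subset_QT_univ (hJ i).1 (hJ i).2.1, rfl⟩
  have hAIne : (A (⋂ i, J i)).Nonempty := by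
    refine ⟨d - (Finset.univ : Finset (Fin d)).card, Finset.univ, ?_, rfl⟩
    exact (Set.iInter_subset J ⟨0, ht⟩).trans (subset_QT_univ (hJ ⟨0, ht⟩).1 (hJ ⟨0, ht⟩).2.1)
  have hRne : {n : ℕ | ∃ i, n = mdim M (J i)}.Nonempty := ⟨mdim M (J ⟨0, ht⟩), ⟨0, ht⟩, rfl⟩
  have hRbdd : BddAbove {n : ℕ | ∃ i, n = mdim M (J i)} := by
    refine ⟨d, fun n hn => ?_⟩
    obtain ⟨i, rfl⟩ := hn
    exact csSup_le (hAne i) fun m hm => by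
      obtain ⟨T, -, rfl⟩ := hm; exact Nat.sub_le _ _
  refine le_antisymm ?_ ?_
  · -- mdim(⋂) ≤ sup
    have hmem : mdim M (⋂ i, J i) ∈ A (⋂ i, J i) :=
      Nat.sSup_mem hAIne (mdim_set_bddAbove M _)
    obtain ⟨T, hsub, hEq⟩ := hmem
    obtain ⟨k, hk⟩ := exists_subset_QT (fun i => (hJ i).1) hsub
    have h1 : mdim M (⋂ i, J i) ≤ mdim M (J k) := by
      rw [hEq]
      exact le_csSup (mdim_set_bddAbove M (J k)) ⟨T, hk, rfl⟩
    exact h1.trans (le_csSup hRbdd ⟨k, rfl⟩)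
  · -- sup ≤ mdim(⋂)
    refine csSup_le hRne fun n hn => ?_
    obtain ⟨i, rfl⟩ := hn
    refine csSup_le_csSup (mdim_set_bddAbove M _) (hAne i) fun m hm => ?_
    obtain ⟨T, hsub, rfl⟩ := hm
    exact ⟨T, (Set.iInter_subset J i).trans hsub, rfl⟩
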